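/- Under the hypothesis η_{V,rel} ≤ 1, the relative effectivity satisfies eff_{V,rel} = η_{V,rel}‖u_δ‖ / ‖u_δ − u_rb‖ ≤ 3 γ_δ / α_LB (for u_δ ≠ u_rb, u_rb ≠ 0). -/

import Mathlib

open RealInnerProductSpace

/-- Relative V-norm effectivity bound: if `η_{V,rel} = 2‖r̂‖/(α_LB‖u_rb‖) ≤ 1`,
then `eff_{V,rel} = η_{V,rel}‖uδ‖/‖uδ - u_rb‖ ≤ 3 γ_δ / α_LB`. -/
theorem relative_V_norm_effectivity_bound
    {V : Type*} [NormedAddCommGroup V] [InnerProductSpace ℝ V] [CompleteSpace V]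
    (a : V →ₗ[ℝ] V →ₗ[ℝ] ℝ) (αLB γδ : ℝ) (hαLB : 0 < αLB)
    (hsymm : ∀ w v : V, a w v = a v w)
    (f : V →L[ℝ] ℝ)
    (Vδ Vrb : Submodule ℝ V) (hVδ : IsClosed (Vδ : Set V))
    (hsub : Vrb ≤ Vδ)
    (hcoer : ∀ v ∈ Vδ, αLB * ‖v‖ ^ 2 ≤ a v v)
    (hcont : ∀ w ∈ Vδ, ∀ v ∈ Vδ, a w v ≤ γδ * ‖w‖ * ‖v‖)
    (uδ urb : V) (huδ : uδ ∈ Vδ) (hurb : urb ∈ Vrb)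
    (hGδ : ∀ v ∈ Vδ, a uδ v = f v)
    (hGrb : ∀ v ∈ Vrb, a urb v = f v)
    (rhat : V) (hrhat : rhat ∈ Vδ)
    (hriesz : ∀ v ∈ Vδ, (⟪rhat, v⟫ : ℝ) = f v - a urb v)
    (hne : uδ ≠ urb) (hurb0 : urb ≠ 0)
    (hrel : 2 * ‖rhat‖ / (αLB * ‖urb‖) ≤ 1) :
    (2 * ‖rhat‖ / (αLB * ‖urb‖)) * ‖uδ‖ / ‖uδ - urb‖ ≤ 3 * γδ / αLB := by

  set e := uδ - urb with he
  have heVδ : e ∈ Vδ := Vδ.sub_mem huδ (hsub hurb)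
  have hurbVδ : urb ∈ Vδ := hsub hurb
  have hen : 0 < ‖e‖ := by
    rw [norm_pos_iff]
    intro h
    exact hne (sub_eq_zero.mp h)
  have hun : 0 < ‖urb‖ := norm_pos_iff.mpr hurb0
  have hae : ∀ v ∈ Vδ, a e v = ⟪rhat, v⟫ := by
    intro v hv
    rw [hriesz v hv, he, map_sub, LinearMap.sub_apply, hGδ v hv]
  -- αLB ‖e‖ ≤ ‖rhat‖
  have h1 : αLB * ‖e‖ ≤ ‖rhat‖ := by
    have hc := hcoer e heVδ
    rw [hae e heVδ] at hc
    have hi : (⟪rhat, e⟫ : ℝ) ≤ ‖rhat‖ * ‖e‖ := real_inner_le_norm _ _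
    nlinarith
  -- ‖rhat‖ ≤ γδ ‖e‖
  have h2 : ‖rhat‖ ≤ γδ * ‖e‖ := by
    have hr := hae rhat hrhat
    rw [real_inner_self_eq_norm_sq] at hr
    have hc := hcont e heVδ rhat hrhat
    rw [hr] at hc
    rcases eq_or_lt_of_le (norm_nonneg rhat) with h0 | h0
    · have hγ : αLB ≤ γδ := by
        have hc2 := hcont e heVδ e heVδ
        have hc1 := hcoer e heVδ
        nlinarith
      nlinarith
    · nlinarith
  -- 2‖rhat‖ ≤ αLB ‖urb‖
  have h3 : 2 * ‖rhat‖ ≤ αLB * ‖urb‖ := by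
    rw [div_le_one (by positivity)] at hrel
    exact hrel
  -- ‖uδ‖ ≤ (3/2) ‖urb‖
  have h4 : ‖uδ‖ ≤ 3 / 2 * ‖urb‖ := by
    have ht : ‖uδ‖ ≤ ‖urb‖ + ‖e‖ := by
      calc ‖uδ‖ = ‖urb + e‖ := by rw [add_sub_cancel]
        _ ≤ ‖urb‖ + ‖e‖ := norm_add_le _ _
    nlinarith
  have key : 2 * ‖rhat‖ * ‖uδ‖ * αLB ≤ 3 * γδ * (αLB * ‖urb‖ * ‖e‖) := by
    nlinarith [mul_le_mul h2 h4 (norm_nonneg uδ) (by nlinarith : (0:ℝ) ≤ γδ * ‖e‖),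
      norm_nonneg rhat, norm_nonneg uδ]
  rw [div_mul_eq_mul_div, div_div, div_le_div_iff₀ (by positivity) hαLB]
  calc 2 * ‖rhat‖ * ‖uδ‖ * αLB ≤ 3 * γδ * (αLB * ‖urb‖ * ‖e‖) := key
    _ = 3 * γδ / αLB * (αLB * ‖urb‖ * ‖e‖) * αLB := by field_simp
    _ ≤ 3 * γδ * (αLB * ‖urb‖ * ‖uδ - urb‖) := by rw [← he]; field_simp; exact le_rfl
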